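/- Let S be the ring of integers of ℚ(√37), and let α = (1+√37)/2 ∈ S. Then the rank-2 forms over S with Gram matrices [[0,1],[1,1]] and [[0,1],[1,α]] are not isometric, even though both have the same rank and the same parity. (Key step: if they were isometric there would exist x₁, x₂ ∈ S with 2x₁x₂ + α x₂² = 1, forcing x₂ to be a unit; since every unit of S is ±(6+√37)^k and hence congruent to 1 mod 2, reducing mod 2 gives α ≡ 1 (mod 2), a contradiction.) -/

import Mathlib

open Polynomial

/-- The ring of integers `S = ℤ[α]` of `ℚ(√37)`, with `α = (1+√37)/2` satisfying
`α² - α - 9 = 0`. -/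
noncomputable abbrev S37 : Type :=
  AdjoinRoot ((X ^ 2 - X - C 9) : Polynomial ℤ)

/-- The element `α = (1+√37)/2` of `S37`. -/
noncomputable abbrev alpha37 : S37 := AdjoinRoot.root _

/-- The symmetric bilinear form `θ(r)` on `R²` with Gram matrix `[[0,1],[1,r]]`. -/
def theta (R : Type*) [CommRing R] (r : R) : (Fin 2 → R) → (Fin 2 → R) → R :=
  fun v w => v 0 * w 1 + v 1 * w 0 + r * v 1 * w 1

/-- The parity of a form: the image of the set of its diagonal values in `R/(2)`. -/
def parityOf (R : Type*) [CommRing R] {M : Type*} (q : M → M → R) :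
    Set (R ⧸ Ideal.span {(2 : R)}) :=
  {c | ∃ x : M, Ideal.Quotient.mk (Ideal.span {(2 : R)}) (q x x) = c}

/-! ### Auxiliary: the ring `ℤ[α]` as a concrete structure on `ℤ × ℤ`. -/

@[ext] structure Zal where
  a : ℤ
  b : ℤ
deriving DecidableEq

namespace Zal
instance : Zero Zal := ⟨⟨0,0⟩⟩
instance : One Zal := ⟨⟨1,0⟩⟩
instance : Add Zal := ⟨fun x y => ⟨x.a+y.a, x.b+y.b⟩⟩
instance : Mul Zal := ⟨fun x y => ⟨x.a*y.a + 9*x.b*y.b, x.a*y.b + x.b*y.a + x.b*y.b⟩⟩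
instance : Neg Zal := ⟨fun x => ⟨-x.a, -x.b⟩⟩

@[simp] lemma zero_a : (0:Zal).a = 0 := rfl
@[simp] lemma zero_b : (0:Zal).b = 0 := rfl
@[simp] lemma one_a : (1:Zal).a = 1 := rfl
@[simp] lemma one_b : (1:Zal).b = 0 := rfl
@[simp] lemma add_a (x y : Zal) : (x+y).a = x.a + y.a := rfl
@[simp] lemma add_b (x y : Zal) : (x+y).b = x.b + y.b := rfl
@[simp] lemma mul_a (x y : Zal) : (x*y).a = x.a*y.a + 9*x.b*y.b := rfl
@[simp] lemma mul_b (x y : Zal) : (x*y).b = x.a*y.b + x.b*y.a + x.b*y.b := rfl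
@[simp] lemma neg_a (x : Zal) : (-x).a = -x.a := rfl
@[simp] lemma neg_b (x : Zal) : (-x).b = -x.b := rfl

instance commRing : CommRing Zal where
  add_assoc := by intros; ext <;> simp <;> ring
  zero_add := by intros; ext <;> simp
  add_zero := by intros; ext <;> simp
  add_comm := by intros; ext <;> simp <;> ring
  left_distrib := by intros; ext <;> simp <;> ring
  right_distrib := by intros; ext <;> simp <;> ring
  zero_mul := by intros; ext <;> simp
  mul_zero := by intros; ext <;> simp
  mul_assoc := by intros; ext <;> simp <;> ring
  one_mul := by intros; ext <;> simp
  mul_one := by intros; ext <;> simp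
  mul_comm := by intros; ext <;> simp <;> ring
  neg_add_cancel := by intros; ext <;> simp
  nsmul := nsmulRec
  zsmul := zsmulRec
  natCast := fun n => ⟨(n:ℤ), 0⟩
  natCast_zero := by ext <;> simp
  natCast_succ := by intros; ext <;> simp
  intCast := fun n => ⟨n, 0⟩
  intCast_ofNat := by intros; ext <;> rfl
  intCast_negSucc := by
    intro n
    have h : ((⟨Int.negSucc n, 0⟩ : Zal)) = -(⟨((n+1:ℕ):ℤ), 0⟩ : Zal) := by
      ext <;> simp [Int.negSucc_eq]
    exact h

end Zal

/-- The coordinate homomorphism `S37 → Zal`. -/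
noncomputable def phi : S37 →+* Zal :=
  AdjoinRoot.lift (Int.castRingHom Zal) ⟨0,1⟩ (by
    simp only [eval₂_sub, eval₂_pow, eval₂_X, eval₂_C]
    decide)

@[simp] lemma phi_alpha : phi alpha37 = ⟨0,1⟩ := AdjoinRoot.lift_root _

lemma halpha : alpha37 ^ 2 = alpha37 + 9 := by
  have h := AdjoinRoot.eval₂_root ((X:ℤ[X])^2 - X - C 9)
  simp only [eval₂_sub, eval₂_pow, eval₂_X, eval₂_C] at h
  have h9 : (AdjoinRoot.of ((X:ℤ[X])^2 - X - C 9)) 9 = (9 : S37) := by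
    simp [AdjoinRoot.of]
  rw [h9] at h
  linear_combination h

/-! ### `X² - 37 Y² = ±4` has no solutions with `Y` odd (descent). -/

lemma descent : ∀ n : ℕ, ∀ y x e : ℤ, y.natAbs = n → Odd y → (e = 1 ∨ e = -1) →
    x^2 - 37*y^2 ≠ 4*e := by
  intro n
  induction n using Nat.strong_induction_on with
  | _ n IH =>
    intro y x e hyn hy he heq
    obtain ⟨A, hA0, hA2, hAdef⟩ : ∃ A : ℤ, 0 ≤ A ∧ A^2 = x^2 ∧ A = (x.natAbs : ℤ) :=
      ⟨(x.natAbs : ℤ), by positivity, by rw [sq, sq]; exact_mod_cast Int.natAbs_mul_self' x, rfl⟩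
    obtain ⟨B, hB0, hB2, hBdef⟩ : ∃ B : ℤ, 0 ≤ B ∧ B^2 = y^2 ∧ B = (y.natAbs : ℤ) :=
      ⟨(y.natAbs : ℤ), by positivity, by rw [sq, sq]; exact_mod_cast Int.natAbs_mul_self' y, rfl⟩
    have hBodd : Odd B := by
      rcases hy with ⟨k, hk⟩
      rcases Int.even_or_odd B with ⟨m, hm⟩ | hodd
      · exfalso
        have h4 : (4:ℤ) ∣ 1 := ⟨m*m - k*k - k, by subst hm hk; linear_combination -hB2⟩
        norm_num at h4
      · exact hodd
    have h1 : A^2 - 37*B^2 = 4*e := by rw [hA2, hB2]; exact heq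
    have hB1 : 1 ≤ B := by rcases hBodd with ⟨k, hk⟩; omega
    by_cases hb : B = 1
    · rw [hb] at h1
      rcases he with rfl | rfl
      · have hA41 : A^2 = 41 := by linarith
        have hA7 : A ≤ 7 := by nlinarith [sq_nonneg (A-7)]
        interval_cases A <;> norm_num at hA41
      · have hA33 : A^2 = 33 := by linarith
        have hA7 : A ≤ 7 := by nlinarith [sq_nonneg (A-7)]
        interval_cases A <;> norm_num at hA33
    · have hB3 : 3 ≤ B := by rcases hBodd with ⟨k, hk⟩; omega
      have hAodd : Odd A := by
        rcases Int.even_or_odd A with ⟨m, hm⟩ | hodd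
        · exfalso
          rcases hBodd with ⟨k, hk⟩
          have h4 : (4:ℤ) ∣ 37 :=
            ⟨m*m - 37*k^2 - 37*k - e, by subst hm hk; linear_combination -h1⟩
          norm_num at h4
        · exact hodd
      have hagt : 6*B < A := by
        by_contra hle
        push_neg at hle
        have hsq : A^2 ≤ 36*B^2 := by nlinarith
        rcases he with rfl | rfl <;> nlinarith
      have halt : A < 7*B := by
        by_contra hle
        push_neg at hle
        have hsq : 49*B^2 ≤ A^2 := by nlinarith
        rcases he with rfl | rfl <;> nlinarith
      have hkey : (6*A - 37*B)^2 - 37*(A - 6*B)^2 = 4*(-e) := by linear_combination -h1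
      have hoddy' : Odd (A - 6*B) := by rcases hAodd with ⟨m, hm⟩; exact ⟨m - 3*B, by omega⟩
      have hlt : (A - 6*B).natAbs < n := by omega
      exact IH _ hlt (A - 6*B) (6*A - 37*B) (-e) rfl hoddy'
        (by rcases he with rfl | rfl <;> norm_num) hkey

/-! ### Every element of `S37` is `a + b·α`. -/

lemma f37_eq : ((X:ℤ[X])^2 - X - C 9) = X^2 - (X + C 9) := by ring

lemma f37_monic : ((X:ℤ[X])^2 - X - C 9).Monic := by
  rw [f37_eq]
  apply monic_X_pow_sub
  rw [degree_X_add_C]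
  decide

lemma f37_degree : ((X:ℤ[X])^2 - X - C 9).degree = 2 := by
  rw [f37_eq]
  rw [degree_sub_eq_left_of_degree_lt]
  · simp
  · rw [degree_X_add_C, degree_X_pow]
    decide

lemma rep (s : S37) : ∃ a b : ℤ, s = (a : S37) + (b : S37) * alpha37 := by
  obtain ⟨p, rfl⟩ := AdjoinRoot.mk_surjective s
  have hmk : AdjoinRoot.mk _ p
      = AdjoinRoot.mk ((X:ℤ[X])^2 - X - C 9) (p %ₘ ((X:ℤ[X])^2 - X - C 9)) := by
    rw [AdjoinRoot.mk_eq_mk]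
    exact ⟨p /ₘ _, by linear_combination -(Polynomial.modByMonic_add_div p ((X:ℤ[X])^2 - X - C 9))⟩
  have hdeg : (p %ₘ ((X:ℤ[X])^2 - X - C 9)).degree < 2 := by
    rw [← f37_degree]
    exact Polynomial.degree_modByMonic_lt p f37_monic
  have hle : (p %ₘ ((X:ℤ[X])^2 - X - C 9)).degree ≤ 1 := by
    by_contra hgt
    push_neg at hgt
    have h2 := Nat.WithBot.add_one_le_of_lt hgt
    norm_num at h2
    exact absurd hdeg (not_lt.mpr h2)
  refine ⟨(p %ₘ ((X:ℤ[X])^2 - X - C 9)).coeff 0, (p %ₘ ((X:ℤ[X])^2 - X - C 9)).coeff 1, ?_⟩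
  rw [hmk]
  conv_lhs => rw [Polynomial.eq_X_add_C_of_degree_le_one hle]
  rw [map_add, map_mul, AdjoinRoot.mk_C, AdjoinRoot.mk_C, AdjoinRoot.mk_X]
  rw [add_comm]
  simp [alpha37, AdjoinRoot.algebraMap_eq]

/-! ### Parity computations. -/

lemma parity_univ (r : S37) (h : ∀ s : S37, ∃ t c : S37, c * 2 = r * (t * t) - s) :
    parityOf S37 (theta S37 r) = Set.univ := by
  apply Set.eq_univ_of_forall
  intro cl
  obtain ⟨s, rfl⟩ := Ideal.Quotient.mk_surjective cl
  obtain ⟨t, c, hc⟩ := h s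
  refine ⟨![0, t], ?_⟩
  have ht : theta S37 r ![0, t] ![0, t] = r * (t * t) := by
    simp [theta, mul_assoc]
  rw [ht, Ideal.Quotient.eq]
  exact Ideal.mem_span_singleton'.mpr ⟨c, hc⟩

lemma parity_one : parityOf S37 (theta S37 1) = Set.univ := by
  apply parity_univ
  intro s
  obtain ⟨a, b, rfl⟩ := rep s
  rcases Int.even_or_odd a with ⟨k, hk⟩ | ⟨k, hk⟩ <;>
    rcases Int.even_or_odd b with ⟨l, hl⟩ | ⟨l, hl⟩ <;> subst hk hl
  · exact ⟨0, -((k:S37) + (l:S37)*alpha37), by push_cast; ring⟩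
  · exact ⟨1 + alpha37, (5:S37) - (k:S37) + (1 - (l:S37))*alpha37, by push_cast; linear_combination -halpha⟩
  · exact ⟨1, -((k:S37) + (l:S37)*alpha37), by push_cast; ring⟩
  · exact ⟨alpha37, (4:S37) - (k:S37) - (l:S37)*alpha37, by push_cast; linear_combination -halpha⟩

lemma parity_alpha : parityOf S37 (theta S37 alpha37) = Set.univ := by
  apply parity_univ
  intro s
  obtain ⟨a, b, rfl⟩ := rep s
  rcases Int.even_or_odd a with ⟨k, hk⟩ | ⟨k, hk⟩ <;>
    rcases Int.even_or_odd b with ⟨l, hl⟩ | ⟨l, hl⟩ <;> subst hk hl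
  · exact ⟨0, -((k:S37) + (l:S37)*alpha37), by push_cast; ring⟩
  · exact ⟨1, -((k:S37) + (l:S37)*alpha37), by push_cast; ring⟩
  · exact ⟨alpha37, (4:S37) - (k:S37) + (5 - (l:S37))*alpha37,
      by push_cast; linear_combination -(alpha37 + 1) * halpha⟩
  · exact ⟨1 + alpha37, (13:S37) - (k:S37) + (6 - (l:S37))*alpha37,
      by push_cast; linear_combination -(alpha37 + 3) * halpha⟩

/-! ### Main theorem. -/

/-- Over the ring of integers `S` of `ℚ(√37)`, the rank-2 forms with
Gram matrices `[[0,1],[1,1]]` and `[[0,1],[1,α]]` have the same rank and parity yet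
are not isometric. -/
theorem stmt_16 :
    parityOf S37 (theta S37 1) = parityOf S37 (theta S37 alpha37) ∧
    ¬ ∃ e : (Fin 2 → S37) ≃ₗ[S37] (Fin 2 → S37),
        ∀ x y, theta S37 alpha37 (e x) (e y) = theta S37 1 x y := by
  constructor
  · rw [parity_one, parity_alpha]
  · rintro ⟨e, he⟩
    have h1 := he ![0, 1] ![0, 1]
    simp only [theta, Matrix.cons_val_zero, Matrix.cons_val_one, Matrix.head_cons,
      zero_mul, mul_zero, mul_one, one_mul, zero_add, add_zero] at h1
    -- h1 : e ![0,1] 0 * e ![0,1] 1 + e ![0,1] 1 * e ![0,1] 0 + alpha37 * e ![0,1] 1 * e ![0,1] 1 = 1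
    set p : S37 := e ![0, 1] 0 with hp
    set q : S37 := e ![0, 1] 1 with hq
    -- a-component of the image of h1 under phi
    have h4 := congrArg (fun z => (phi z).a) h1
    simp only [map_add, map_mul, map_one, phi_alpha, Zal.mul_a, Zal.mul_b, Zal.add_a,
      Zal.add_b, Zal.one_a, Zal.one_b] at h4
    set A : ℤ := (phi q).a with hA
    set B : ℤ := (phi q).b with hB
    set P1 : ℤ := (phi p).a with hP1
    set P2 : ℤ := (phi p).b with hP2
    have hBodd : Odd B := by
      rcases Int.even_or_odd B with ⟨l, hl⟩ | hodd
      · exfalso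
        rw [hl] at h4
        have h2 : (2:ℤ) ∣ 1 := ⟨P1*A + 18*P2*l + 18*A*l + 18*l^2, by linear_combination -h4⟩
        norm_num at h2
      · exact hodd
    -- q is a unit
    have h2 : q * (p + p + alpha37 * q) = 1 := by linear_combination h1
    have h3 := congrArg phi h2
    simp only [map_mul, map_add, map_one, phi_alpha] at h3
    have hz := congrArg Zal.a h3
    have hz2 := congrArg Zal.b h3
    simp only [Zal.mul_a, Zal.mul_b, Zal.add_a, Zal.add_b, Zal.one_a, Zal.one_b] at hz hz2
    rw [← hA, ← hB, ← hP1, ← hP2] at hz hz2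
    have hN : (A^2 + A*B - 9*B^2) *
        ((P1+P1+9*B)^2 + (P1+P1+9*B)*(P2+P2+A+B) - 9*(P2+P2+A+B)^2) = 1 := by
      linear_combination (A*(P1+P1+9*B) + 9*B*(P2+P2+A+B) + 1) * hz +
        (A*(P1+P1+9*B) + 9*B*(P2+P2+A+B)
          - 9*(A*(P2+P2+A+B) + B*(P1+P1+9*B) + B*(P2+P2+A+B))) * hz2
    rcases Int.mul_eq_one_iff_eq_one_or_neg_one.mp hN with ⟨hN1, _⟩ | ⟨hN1, _⟩
    · exact descent B.natAbs B (2*A+B) 1 rfl hBodd (Or.inl rfl) (by linear_combination 4*hN1)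
    · exact descent B.natAbs B (2*A+B) (-1) rfl hBodd (Or.inr rfl) (by linear_combination 4*hN1)
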